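/- arXiv:1705.09643 — 2 statements merged into one kernel-verified Lean document; each statement's English description precedes it below -/
import Mathlib

section
/- If y ∉ C is red with respect to C (y has exactly one neighbor in C), then m(C ∪ {y}) ≤ m(C) − 1, q(C ∪ {y}) ≤ q(C) and p̂(C ∪ {y}) ≤ p̂(C) + 1; consequently f(C ∪ {y}) ≤ f(C). -/
open SimpleGraph

variable {V : Type*} [Fintype V] [DecidableEq V]

/-- `pG G C` : number of connected components of the induced subgraph `G[C]`. -/
noncomputable def pG (G : SimpleGraph V) (C : Set V) : ℕ :=
  Nat.card (G.induce C).ConnectedComponent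

/-- `spanG G C` : the spanning subgraph `G⟨C⟩` of `G`, with vertex set `V` and
edge set consisting of those edges of `G` with at least one endpoint in `C`. -/
def spanG (G : SimpleGraph V) (C : Set V) : SimpleGraph V where
  Adj u v := G.Adj u v ∧ (u ∈ C ∨ v ∈ C)
  symm := ⟨fun u v h => ⟨h.1.symm, h.2.symm⟩⟩
  loopless := ⟨fun v h => G.loopless.irrefl v h.1⟩

/-- `qG G C` : number of connected components of `G⟨C⟩`. -/
noncomputable def qG (G : SimpleGraph V) (C : Set V) : ℕ :=
  Nat.card (spanG G C).ConnectedComponent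

/-- number of neighbors of `v` lying in `C`. -/
noncomputable def nbrsIn (G : SimpleGraph V) (C : Set V) (v : V) : ℕ :=
  {u | u ∈ C ∧ G.Adj v u}.ncard

/-- `mG G C` : number of vertices outside `C` having at most one neighbor in `C`. -/
noncomputable def mG (G : SimpleGraph V) (C : Set V) : ℕ :=
  {v | v ∉ C ∧ nbrsIn G C v ≤ 1}.ncard

/-- `phat G C = max_{x ∈ C} pG G (C \ {x})`, with `phat G ∅ = 0`. -/
noncomputable def phat (G : SimpleGraph V) (C : Set V) : ℕ :=
  sSup ((fun x => pG G (C \ {x})) '' C)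

/-- the potential function `f(C) = p̂(C) + q(C) + m(C)`. -/
noncomputable def fG (G : SimpleGraph V) (C : Set V) : ℕ :=
  phat G C + qG G C + mG G C

/-- `G` is biconnected: `|V| ≥ 3` and deleting any single vertex leaves `G` connected. -/
def Biconnected (G : SimpleGraph V) : Prop :=
  3 ≤ Fintype.card V ∧ ∀ v : V, (G.induce {v}ᶜ).Connected


section Aux

variable {V : Type*} [Fintype V] [DecidableEq V]

/-- inclusion homomorphism between induced subgraphs. -/
def inclHom (G : SimpleGraph V) {S T : Set V} (h : S ⊆ T) : G.induce S →g G.induce T where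
  toFun := Set.inclusion h
  map_rel' := fun ha => ha

lemma card_cc_le_of_le {G H : SimpleGraph V} (h : G ≤ H) :
    Nat.card H.ConnectedComponent ≤ Nat.card G.ConnectedComponent := by
  apply Nat.card_le_card_of_surjective (ConnectedComponent.map (Hom.ofLE h))
  intro d
  exact ConnectedComponent.ind (fun v => ⟨G.connectedComponentMk v, rfl⟩) d

lemma pG_le_diff (G : SimpleGraph V) {S : Set V} {x : V} (hx : x ∈ S) :
    pG G S ≤ pG G (S \ {x}) + 1 := by
  classical
  have hψ : Function.Surjective
      (Sum.elim (ConnectedComponent.map (inclHom G (Set.diff_subset : S \ {x} ⊆ S)))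
        (fun _ : Unit => (G.induce S).connectedComponentMk (⟨x, hx⟩ : S))) := by
    intro d
    refine ConnectedComponent.ind (fun v => ?_) d
    by_cases hv : (v : V) = x
    · refine ⟨Sum.inr (), ?_⟩
      obtain rfl : v = ⟨x, hx⟩ := Subtype.ext hv
      rfl
    · refine ⟨Sum.inl ((G.induce (S \ {x})).connectedComponentMk ⟨(v : V), ⟨v.2, hv⟩⟩), ?_⟩
      simp only [Sum.elim_inl, ConnectedComponent.map_mk]
      rfl
  have := Nat.card_le_card_of_surjective _ hψ
  simpa [pG, Nat.card_sum] using this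

end Aux

/-- if `y ∉ C` is red w.r.t. `C` (exactly one neighbor in `C`), then
`m(C∪{y}) ≤ m(C) - 1`, `q(C∪{y}) ≤ q(C)`, `p̂(C∪{y}) ≤ p̂(C) + 1`, and hence
`f(C∪{y}) ≤ f(C)`. -/
theorem stmt2 (G : SimpleGraph V) (hG : Biconnected G) (C : Set V) (y : V)
    (hy : y ∉ C) (hred : nbrsIn G C y = 1) :
    (mG G (C ∪ {y}) : ℤ) ≤ (mG G C : ℤ) - 1 ∧ qG G (C ∪ {y}) ≤ qG G C ∧
      phat G (C ∪ {y}) ≤ phat G C + 1 ∧ fG G (C ∪ {y}) ≤ fG G C := by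

  classical
  -- C is nonempty
  obtain ⟨u0, hu0⟩ : ∃ u, u ∈ C ∧ G.Adj y u := by
    have h1 : {u | u ∈ C ∧ G.Adj y u}.Nonempty := by
      rw [← Set.ncard_pos (Set.toFinite _)]
      unfold nbrsIn at hred; omega
    exact h1
  -- m part
  have hm : mG G (C ∪ {y}) + 1 ≤ mG G C := by
    have hyA : y ∈ {v | v ∉ C ∧ nbrsIn G C v ≤ 1} := ⟨hy, le_of_eq hred⟩
    have hsub : {v | v ∉ C ∪ {y} ∧ nbrsIn G (C ∪ {y}) v ≤ 1} ⊆
        {v | v ∉ C ∧ nbrsIn G C v ≤ 1} \ {y} := by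
      rintro v ⟨hv1, hv2⟩
      have hmono : nbrsIn G C v ≤ nbrsIn G (C ∪ {y}) v :=
        Set.ncard_le_ncard (fun u hu => ⟨Or.inl hu.1, hu.2⟩) (Set.toFinite _)
      refine ⟨⟨fun h => hv1 (Or.inl h), le_trans hmono hv2⟩, fun h => hv1 (Or.inr h)⟩
    have h2 := Set.ncard_le_ncard hsub (Set.toFinite _)
    have h3 := Set.ncard_diff_singleton_add_one hyA (Set.toFinite _)
    exact le_trans (Nat.add_le_add_right h2 1) (le_of_eq h3)
  -- q part
  have hq : qG G (C ∪ {y}) ≤ qG G C := by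
    apply card_cc_le_of_le
    intro u v h
    exact ⟨h.1, h.2.imp (fun h => Or.inl h) (fun h => Or.inl h)⟩
  -- phat part
  have hbdd : BddAbove ((fun x => pG G (C \ {x})) '' C) :=
    (C.toFinite.image _).bddAbove
  have hphat : phat G (C ∪ {y}) ≤ phat G C + 1 := by
    unfold phat
    refine csSup_le ⟨_, Set.mem_image_of_mem _ (Set.mem_union_right _ rfl)⟩ ?_
    rintro b ⟨x, hx, rfl⟩
    simp only
    rcases hx with hx | hx
    · -- x ∈ C
      have hyx : y ≠ x := fun h => hy (h ▸ hx)
      show pG G ((C ∪ {y}) \ {x}) ≤ _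
      have hset : (C ∪ {y}) \ {x} = (C \ {x}) ∪ {y} := by
        ext v
        simp only [Set.mem_diff, Set.mem_union, Set.mem_singleton_iff]
        constructor
        · rintro ⟨hv | hv, hvx⟩
          · exact Or.inl ⟨hv, hvx⟩
          · exact Or.inr hv
        · rintro (⟨hv, hvx⟩ | hv)
          · exact ⟨Or.inl hv, hvx⟩
          · exact ⟨Or.inr hv, hv ▸ hyx.symm ∘ Eq.symm⟩
      rw [hset]
      have h1 : pG G ((C \ {x}) ∪ {y}) ≤ pG G (((C \ {x}) ∪ {y}) \ {y}) + 1 :=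
        pG_le_diff G (Or.inr rfl)
      have h2 : ((C \ {x}) ∪ {y}) \ {y} = C \ {x} := by
        ext v
        simp only [Set.mem_diff, Set.mem_union, Set.mem_singleton_iff]
        constructor
        · rintro ⟨hv | hv, hvy⟩
          · exact hv
          · exact absurd hv hvy
        · rintro ⟨hv, hvx⟩
          exact ⟨Or.inl ⟨hv, hvx⟩, fun h => hy (h ▸ hv)⟩
      rw [h2] at h1
      exact h1.trans (add_le_add_left (le_csSup hbdd ⟨x, hx, rfl⟩) 1)
    · -- x = y
      subst hx
      show pG G ((C ∪ {x}) \ {x}) ≤ _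
      have hset : (C ∪ {x}) \ {x} = C := by
        ext v
        simp only [Set.mem_diff, Set.mem_union, Set.mem_singleton_iff]
        constructor
        · rintro ⟨hv | hv, hvx⟩
          · exact hv
          · exact absurd hv hvx
        · intro hv
          exact ⟨Or.inl hv, fun h => hy (h ▸ hv)⟩
      rw [hset]
      have h1 : pG G C ≤ pG G (C \ {u0}) + 1 := pG_le_diff G hu0.1
      exact h1.trans (add_le_add_left (le_csSup hbdd ⟨u0, hu0.1, rfl⟩) 1)
  refine ⟨by omega, hq, hphat, ?_⟩
  unfold fG
  omega
end

section
/- If y ∉ C is white with respect to C (y has no neighbor in C), then m(C ∪ {y}) ≤ m(C) − 1, q(C ∪ {y}) ≤ q(C) − 1 and p̂(C ∪ {y}) ≤ p̂(C) + 1; consequently f(C ∪ {y}) ≤ f(C). -/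
open SimpleGraph

variable {V : Type*} [Fintype V] [DecidableEq V]

private lemma card_le_of_range_cofinite {A B : Type*} [Finite A] [Finite B]
    (f : A → B) (b₀ : B) (h : ∀ b : B, b ≠ b₀ → ∃ a, f a = b) :
    Nat.card B ≤ Nat.card A + 1 := by
  have hsub : (Set.univ : Set B) ⊆ Set.range f ∪ {b₀} := by
    intro b _
    rcases eq_or_ne b b₀ with rfl | hb
    · exact Or.inr rfl
    · exact Or.inl (h b hb)
  calc Nat.card B = (Set.univ : Set B).ncard := (Set.ncard_univ B).symm
    _ ≤ (Set.range f ∪ {b₀}).ncard := Set.ncard_le_ncard hsub (Set.toFinite _)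
    _ ≤ (Set.range f).ncard + ({b₀} : Set B).ncard := Set.ncard_union_le _ _
    _ ≤ Nat.card A + 1 := by
        rw [Set.ncard_singleton]
        gcongr
        rw [← Nat.card_coe_set_eq]
        exact Nat.card_le_card_of_surjective _ Set.rangeFactorization_surjective

private lemma card_lt_of_surj_not_inj {A B : Type*} [Finite A] (f : A → B)
    (hsurj : Function.Surjective f) (hninj : ¬ Function.Injective f) :
    Nat.card B < Nat.card A := by
  haveI : Finite B := Finite.of_surjective f hsurj
  haveI := Fintype.ofFinite A
  haveI := Fintype.ofFinite B
  rw [Nat.card_eq_fintype_card, Nat.card_eq_fintype_card]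
  exact Fintype.card_lt_of_surjective_not_injective f hsurj hninj

private lemma pG_le_add_one (G : SimpleGraph V) {S T : Set V} (hST : S ⊆ T)
    {z : V} (hz : z ∈ T) (hTS : T ⊆ S ∪ {z}) :
    pG G T ≤ pG G S + 1 := by
  classical
  let φ : G.induce S →g G.induce T := ⟨Set.inclusion hST, fun {a b} hab => hab⟩
  refine card_le_of_range_cofinite (SimpleGraph.ConnectedComponent.map φ)
    ((G.induce T).connectedComponentMk ⟨z, hz⟩) ?_
  intro b hb
  induction b using SimpleGraph.ConnectedComponent.ind with
  | _ v =>
    rcases hTS v.2 with hvS | hvz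
    · refine ⟨(G.induce S).connectedComponentMk ⟨v.1, hvS⟩, ?_⟩
      rw [SimpleGraph.ConnectedComponent.map_mk]
      congr 1
    · exact absurd (by congr 1; exact Subtype.ext hvz) hb

/-- if `y ∉ C` is white w.r.t. `C` (no neighbor in `C`), then
`m(C∪{y}) ≤ m(C) - 1`, `q(C∪{y}) ≤ q(C) - 1`, `p̂(C∪{y}) ≤ p̂(C) + 1`, and hence
`f(C∪{y}) ≤ f(C)`. -/
theorem stmt3 (G : SimpleGraph V) (hG : Biconnected G) (C : Set V) (y : V)
    (hy : y ∉ C) (hwhite : nbrsIn G C y = 0) :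
    (mG G (C ∪ {y}) : ℤ) ≤ (mG G C : ℤ) - 1 ∧ (qG G (C ∪ {y}) : ℤ) ≤ (qG G C : ℤ) - 1 ∧
      phat G (C ∪ {y}) ≤ phat G C + 1 ∧ fG G (C ∪ {y}) ≤ fG G C := by
  classical
  have hwhite' : ∀ u ∈ C, ¬ G.Adj y u := by
    intro u hu hadj
    have h0 : {u | u ∈ C ∧ G.Adj y u} = ∅ := by
      rw [← Set.ncard_eq_zero (Set.toFinite _)]; exact hwhite
    have hmem : u ∈ {u | u ∈ C ∧ G.Adj y u} := ⟨hu, hadj⟩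
    rw [h0] at hmem
    exact hmem
  -- m part
  have hyA : y ∈ {v | v ∉ C ∧ nbrsIn G C v ≤ 1} := ⟨hy, by rw [hwhite]; norm_num⟩
  have hm : mG G (C ∪ {y}) + 1 ≤ mG G C := by
    have hsub : {v | v ∉ C ∪ {y} ∧ nbrsIn G (C ∪ {y}) v ≤ 1} ⊆
        {v | v ∉ C ∧ nbrsIn G C v ≤ 1} \ {y} := by
      rintro v ⟨hv, hnb⟩
      have hvC : v ∉ C := fun h => hv (Or.inl h)
      have hvy : v ≠ y := fun h => hv (Or.inr h)
      refine ⟨⟨hvC, le_trans (Set.ncard_le_ncard ?_ (Set.toFinite _)) hnb⟩, hvy⟩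
      rintro u ⟨huC, hadj⟩
      exact ⟨Or.inl huC, hadj⟩
    have h1 : mG G (C ∪ {y}) ≤ ({v | v ∉ C ∧ nbrsIn G C v ≤ 1} \ {y}).ncard :=
      Set.ncard_le_ncard hsub (Set.toFinite _)
    have h2 : ({v | v ∉ C ∧ nbrsIn G C v ≤ 1} \ {y}).ncard
        = {v | v ∉ C ∧ nbrsIn G C v ≤ 1}.ncard - 1 :=
      Set.ncard_diff_singleton_of_mem hyA
    have h3 : 1 ≤ {v | v ∉ C ∧ nbrsIn G C v ≤ 1}.ncard :=
      (Set.ncard_pos (Set.toFinite _)).mpr ⟨y, hyA⟩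
    have e2 : mG G C = {v | v ∉ C ∧ nbrsIn G C v ≤ 1}.ncard := rfl
    rw [e2]
    omega
  -- y has a neighbor
  obtain ⟨z, hyz⟩ : ∃ z, G.Adj y z := by
    obtain ⟨v, hvy⟩ := Fintype.exists_ne_of_one_lt_card (by have := hG.1; omega) y
    obtain ⟨w, hw⟩ : ∃ w : V, w ≠ v ∧ w ≠ y := by
      by_contra hcon
      push_neg at hcon
      have hsub : (Finset.univ : Finset V) ⊆ {v, y} := by
        intro u _
        rcases eq_or_ne u v with rfl | hu
        · simp
        · simp [hcon u hu]
      have hcard := Finset.card_le_card hsub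
      have h2 : ({v, y} : Finset V).card ≤ 2 :=
        (Finset.card_insert_le _ _).trans (by simp)
      rw [Finset.card_univ] at hcard
      have h3 := hG.1
      omega
    have hymem : y ∈ ({v}ᶜ : Set V) := by
      simp only [Set.mem_compl_iff, Set.mem_singleton_iff]
      exact fun h => hvy h.symm
    have hwmem : w ∈ ({v}ᶜ : Set V) := by
      simp only [Set.mem_compl_iff, Set.mem_singleton_iff]
      exact hw.1
    obtain ⟨p⟩ := (hG.2 v).preconnected ⟨y, hymem⟩ ⟨w, hwmem⟩
    have hne : (⟨y, hymem⟩ : ({v}ᶜ : Set V)) ≠ ⟨w, hwmem⟩ :=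
      fun h => hw.2 (congrArg Subtype.val h).symm
    have hnn : ¬ p.Nil := SimpleGraph.Walk.not_nil_of_ne hne
    exact ⟨(p.getVert 1).1, p.adj_snd hnn⟩
  have hzC : z ∉ C := fun h => hwhite' z h hyz
  have hzy : z ≠ y := fun h => G.loopless.irrefl y (h ▸ hyz)
  -- q part
  have hq : qG G (C ∪ {y}) < qG G C := by
    have hle : spanG G C ≤ spanG G (C ∪ {y}) := by
      intro u v huv
      change G.Adj u v ∧ (u ∈ C ∨ v ∈ C) at huv
      change G.Adj u v ∧ (u ∈ C ∪ {y} ∨ v ∈ C ∪ {y})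
      exact ⟨huv.1, huv.2.imp Or.inl Or.inl⟩
    refine card_lt_of_surj_not_inj
      (SimpleGraph.ConnectedComponent.map (SimpleGraph.Hom.ofLE hle)) ?_ ?_
    · intro b
      induction b using SimpleGraph.ConnectedComponent.ind with
      | _ v => exact ⟨(spanG G C).connectedComponentMk v,
          SimpleGraph.ConnectedComponent.map_mk _ v⟩
    · intro hinj
      have hfy : (SimpleGraph.ConnectedComponent.map (SimpleGraph.Hom.ofLE hle))
            ((spanG G C).connectedComponentMk y)
          = (SimpleGraph.ConnectedComponent.map (SimpleGraph.Hom.ofLE hle))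
            ((spanG G C).connectedComponentMk z) := by
        rw [SimpleGraph.ConnectedComponent.map_mk, SimpleGraph.ConnectedComponent.map_mk]
        exact SimpleGraph.ConnectedComponent.sound ⟨SimpleGraph.Walk.cons
          (⟨hyz, Or.inl (Or.inr rfl)⟩ : (spanG G (C ∪ {y})).Adj y z) SimpleGraph.Walk.nil⟩
      have heq := hinj hfy
      obtain ⟨p⟩ := SimpleGraph.ConnectedComponent.exact heq
      have hnn : ¬ p.Nil := SimpleGraph.Walk.not_nil_of_ne (Ne.symm hzy)
      have hadj := p.adj_snd hnn
      rcases hadj.2 with hC | hC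
      · exact hy hC
      · exact hwhite' _ hC hadj.1
  -- phat part
  have hbdd : BddAbove ((fun x => pG G (C \ {x})) '' C) := (C.toFinite.image _).bddAbove
  have hphat : phat G (C ∪ {y}) ≤ phat G C + 1 := by
    refine csSup_le ⟨_, ⟨y, Or.inr rfl, rfl⟩⟩ ?_
    rintro n ⟨x, hx, rfl⟩
    show pG G ((C ∪ {y}) \ {x}) ≤ phat G C + 1
    rcases hx with hxC | hxy
    · have hyx : y ≠ x := fun h => hy (h ▸ hxC)
      have h1 : (C ∪ {y}) \ {x} = (C \ {x}) ∪ {y} := by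
        ext v
        rcases eq_or_ne v y with rfl | hv <;> simp_all [Set.mem_diff]
      rw [h1]
      have h2 := pG_le_add_one G (S := C \ {x}) (T := (C \ {x}) ∪ {y})
        Set.subset_union_left (z := y) (Or.inr rfl) subset_rfl
      have h3 : pG G (C \ {x}) ≤ phat G C := le_csSup hbdd ⟨x, hxC, rfl⟩
      omega
    · have hxy' : x = y := hxy
      subst hxy'
      have h1 : (C ∪ {x}) \ {x} = C := by
        ext v
        simp only [Set.mem_diff, Set.mem_union, Set.mem_singleton_iff]
        constructor
        · rintro ⟨h | h, hv⟩
          · exact h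
          · exact absurd h hv
        · intro h
          exact ⟨Or.inl h, fun hv => hy (hv ▸ h)⟩
      rw [h1]
      rcases C.eq_empty_or_nonempty with rfl | ⟨x₀, hx₀⟩
      · haveI : IsEmpty ((G.induce (∅ : Set V)).ConnectedComponent) :=
          ⟨fun K => K.ind (fun v => absurd v.2 (Set.notMem_empty _)) K⟩
        simp [pG, Nat.card_of_isEmpty]
      · have h2 := pG_le_add_one G (S := C \ {x₀}) (T := C)
          Set.diff_subset hx₀ (fun v hv => by
            rcases eq_or_ne v x₀ with rfl | hne
            · exact Or.inr rfl
            · exact Or.inl ⟨hv, hne⟩)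
        have h3 : pG G (C \ {x₀}) ≤ phat G C := le_csSup hbdd ⟨x₀, hx₀, rfl⟩
        omega
  refine ⟨by push_cast; omega, by push_cast; omega, hphat, ?_⟩
  unfold fG
  omega
end
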